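/- Exact recovery from a dual certificate: under the hypotheses of the dual certificate lemma (existence of z⁽ˣ⁾, z⁽ᵉ⁾ with the stated sign and ℓ^∞ conditions) and the additional hypothesis ‖A_{JᶜT}‖ < 1, the pair (x⋆, e⋆) is the unique minimizer of ‖x‖₁ + λ‖e‖₁ subject to A_{Ω•} x + e = A_{Ω•} x⋆ + e⋆. -/

import Mathlib

open Matrix

/-- Spectral (ℓ²→ℓ² operator) norm of a real matrix. -/
noncomputable def specNorm {α β : Type*} [Fintype α] [Fintype β] [DecidableEq β]
    (B : Matrix α β ℝ) : ℝ :=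
  ‖LinearMap.toContinuousLinearMap (Matrix.toEuclideanLin B)‖

/-- Euclidean (ℓ²) norm of a finitely indexed real vector. -/
noncomputable def l2 {α : Type*} [Fintype α] (v : α → ℝ) : ℝ := Real.sqrt (∑ i, v i ^ 2)

/-- ℓ¹ norm of a finitely indexed real vector. -/
def l1 {α : Type*} [Fintype α] (v : α → ℝ) : ℝ := ∑ i, |v i|

/-- Submatrix of `A` with rows indexed by `J` and columns indexed by `T`. -/
def sub {n : ℕ} (A : Matrix (Fin n) (Fin n) ℝ) (J T : Finset (Fin n)) :
    Matrix J T ℝ := A.submatrix (fun i => (i : Fin n)) (fun j => (j : Fin n))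

/-- Submatrix of `A` with rows indexed by `J` (all columns kept). -/
def rowSub {n : ℕ} (A : Matrix (Fin n) (Fin n) ℝ) (J : Finset (Fin n)) :
    Matrix J (Fin n) ℝ := A.submatrix (fun i => (i : Fin n)) id

lemma euc_norm_eq {γ : Type*} [Fintype γ] (w : γ → ℝ) :
    ‖(WithLp.equiv 2 (γ → ℝ)).symm w‖ = l2 w := by
  rw [EuclideanSpace.norm_eq, l2]
  congr 1
  apply Finset.sum_congr rfl
  intro i _
  simp [Real.norm_eq_abs, sq_abs]

lemma l2_mulVec_le {α β : Type*} [Fintype α] [Fintype β] [DecidableEq β]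
    (B : Matrix α β ℝ) (v : β → ℝ) :
    l2 (B.mulVec v) ≤ specNorm B * l2 v := by
  have h := (LinearMap.toContinuousLinearMap (Matrix.toEuclideanLin B)).le_opNorm
    ((WithLp.equiv 2 (β → ℝ)).symm v)
  rw [LinearMap.coe_toContinuousLinearMap'] at h
  rw [Matrix.toEuclideanLin_apply, show ((WithLp.equiv 2 (β → ℝ)).symm v).ofLp = v from rfl,
    ← WithLp.equiv_symm_apply, euc_norm_eq, euc_norm_eq] at h
  exact h

lemma l2_nonneg {α : Type*} [Fintype α] (v : α → ℝ) : 0 ≤ l2 v := Real.sqrt_nonneg _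

lemma l2_sq {α : Type*} [Fintype α] (v : α → ℝ) : l2 v ^ 2 = ∑ i, v i ^ 2 := by
  rw [l2, Real.sq_sqrt]
  positivity

lemma abs_add_sign (a b : ℝ) : |a| + Real.sign a * b ≤ |a + b| := by
  rcases lt_trichotomy a 0 with h | h | h
  · rw [Real.sign_of_neg h, abs_of_neg h]
    have : -(a + b) ≤ |a + b| := neg_le_abs _
    linarith
  · subst h
    simp
  · rw [Real.sign_of_pos h, abs_of_pos h]
    have : a + b ≤ |a + b| := le_abs_self _
    linarith

/-- Exact recovery from a dual certificate: `(xs, es)` is the unique minimizer. -/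
theorem stmt4 {n : ℕ} (A : Matrix (Fin n) (Fin n) ℝ) (hA : Aᵀ * A = 1)
    (Ω S T : Finset (Fin n)) (hSΩ : S ⊆ Ω) (J : Finset (Fin n)) (hJ : J = Ω \ S)
    (xs : Fin n → ℝ) (hxs : ∀ i, i ∉ T → xs i = 0)
    (es : Ω → ℝ) (hes : ∀ i : Ω, (i : Fin n) ∉ S → es i = 0)
    (lam : ℝ) (hlam : 0 < lam)
    (zx : Fin n → ℝ) (ze : Ω → ℝ)
    (h1 : zx = lam • (rowSub A Ω)ᵀ.mulVec ze)
    (h2T : ∀ i, i ∈ T → zx i = Real.sign (xs i))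
    (h2Tc : ∀ i, i ∉ T → |zx i| ≤ 3 / 4)
    (h3S : ∀ i : Ω, (i : Fin n) ∈ S → ze i = Real.sign (es i))
    (h3J : ∀ i : Ω, (i : Fin n) ∈ J → |ze i| ≤ 3 / 4)
    (hnorm : specNorm (sub A Jᶜ T) < 1) :
    ∀ x : Fin n → ℝ, ∀ e : Ω → ℝ,
      (rowSub A Ω).mulVec x + e = (rowSub A Ω).mulVec xs + es →
      (l1 xs + lam * l1 es ≤ l1 x + lam * l1 e) ∧
      (¬(x = xs ∧ e = es) → l1 xs + lam * l1 es < l1 x + lam * l1 e) := by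
  classical
  intro x e hc
  set M := rowSub A Ω with hM
  set h : Fin n → ℝ := x - xs with hh
  set f : Ω → ℝ := e - es with hf
  -- constraint on the difference
  have hconstr : ∀ j : Ω, M.mulVec h j = -f j := by
    intro j
    have hc' := congrFun hc j
    simp only [Pi.add_apply] at hc'
    have : M.mulVec h j = M.mulVec x j - M.mulVec xs j := by
      rw [hh, Matrix.mulVec_sub, Pi.sub_apply]
    rw [this]
    simp only [hf, Pi.sub_apply, Pi.neg_apply]
    linarith
  -- key orthogonality identity
  have hkey : (∑ i, zx i * h i) = -(lam * ∑ j : Ω, ze j * f j) := by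
    have e1 : (∑ i, zx i * h i) = ∑ i, ∑ j : Ω, lam * (M j i * ze j * h i) := by
      apply Finset.sum_congr rfl
      intro i _
      rw [h1]
      simp only [Pi.smul_apply, smul_eq_mul, Matrix.mulVec, dotProduct,
        Matrix.transpose_apply, Finset.sum_mul, Finset.mul_sum]
      apply Finset.sum_congr rfl
      intro j _
      ring
    rw [e1, Finset.sum_comm]
    have e2 : ∀ j : Ω, (∑ i, lam * (M j i * ze j * h i)) = lam * (ze j * M.mulVec h j) := by
      intro j
      rw [Matrix.mulVec]
      simp only [dotProduct, Finset.mul_sum]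
      apply Finset.sum_congr rfl
      intro i _
      ring
    calc (∑ j : Ω, ∑ i, lam * (M j i * ze j * h i))
        = ∑ j : Ω, lam * (ze j * M.mulVec h j) := Finset.sum_congr rfl fun j _ => e2 j
      _ = ∑ j : Ω, -(lam * (ze j * f j)) := by
          apply Finset.sum_congr rfl
          intro j _
          rw [hconstr j]; ring
      _ = -(lam * ∑ j : Ω, ze j * f j) := by
          rw [Finset.sum_neg_distrib, Finset.mul_sum]
  -- per-index inequalities
  have key1 : ∀ i, |xs i| + zx i * h i + (if i ∈ T then 0 else |h i| / 4) ≤ |x i| := by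
    intro i
    by_cases hiT : i ∈ T
    · simp only [if_pos hiT, add_zero]
      rw [h2T i hiT]
      have hx : xs i + h i = x i := by simp [hh]
      have := abs_add_sign (xs i) (h i)
      rw [hx] at this
      exact this
    · simp only [if_neg hiT]
      have hxs0 := hxs i hiT
      have hhi : h i = x i := by simp [hh, hxs0]
      have hb := h2Tc i hiT
      have hmm : zx i * h i ≤ |zx i| * |h i| := by
        calc zx i * h i ≤ |zx i * h i| := le_abs_self _
          _ = |zx i| * |h i| := abs_mul _ _
      have h3 : |zx i| * |h i| ≤ (3/4) * |h i| :=
        mul_le_mul_of_nonneg_right hb (abs_nonneg _)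
      rw [hxs0, abs_zero, ← hhi]
      linarith
  have key2 : ∀ j : Ω, |es j| + ze j * f j + (if (j : Fin n) ∈ S then 0 else |f j| / 4)
      ≤ |e j| := by
    intro j
    by_cases hjS : (j : Fin n) ∈ S
    · simp only [if_pos hjS, add_zero]
      rw [h3S j hjS]
      have hx : es j + f j = e j := by simp [hf]
      have := abs_add_sign (es j) (f j)
      rw [hx] at this
      exact this
    · simp only [if_neg hjS]
      have hes0 := hes j hjS
      have hfj : f j = e j := by simp [hf, hes0]
      have hb : |ze j| ≤ 3 / 4 := by
        apply h3J j
        rw [hJ]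
        exact Finset.mem_sdiff.mpr ⟨j.2, hjS⟩
      have hmm : ze j * f j ≤ |ze j| * |f j| := by
        calc ze j * f j ≤ |ze j * f j| := le_abs_self _
          _ = |ze j| * |f j| := abs_mul _ _
      have h3 : |ze j| * |f j| ≤ (3/4) * |f j| :=
        mul_le_mul_of_nonneg_right hb (abs_nonneg _)
      rw [hes0, abs_zero, ← hfj]
      linarith
  set P : ℝ := ∑ i, (if i ∈ T then 0 else |h i| / 4) with hPdef
  set Q : ℝ := ∑ j : Ω, (if (j : Fin n) ∈ S then 0 else |f j| / 4) with hQdef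
  have hP : 0 ≤ P := by
    apply Finset.sum_nonneg
    intro i _
    split <;> positivity
  have hQ : 0 ≤ Q := by
    apply Finset.sum_nonneg
    intro j _
    split <;> positivity
  have sum1 : l1 xs + (∑ i, zx i * h i) + P ≤ l1 x := by
    rw [l1, l1, hPdef, ← Finset.sum_add_distrib, ← Finset.sum_add_distrib]
    exact Finset.sum_le_sum fun i _ => key1 i
  have sum2 : l1 es + (∑ j : Ω, ze j * f j) + Q ≤ l1 e := by
    rw [l1, l1, hQdef, ← Finset.sum_add_distrib, ← Finset.sum_add_distrib]
    exact Finset.sum_le_sum fun j _ => key2 j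
  have main : l1 xs + lam * l1 es + P + lam * Q ≤ l1 x + lam * l1 e := by
    have s2' := mul_le_mul_of_nonneg_left sum2 hlam.le
    rw [mul_add, mul_add] at s2'
    linarith [sum1, s2', hkey]
  constructor
  · have := mul_nonneg hlam.le hQ
    linarith
  · intro hne
    by_cases hPQ : P = 0 ∧ Q = 0
    · exfalso
      apply hne
      obtain ⟨hP0, hQ0⟩ := hPQ
      -- each term of P is zero
      have hhT : ∀ i, i ∉ T → h i = 0 := by
        intro i hi
        have := (Finset.sum_eq_zero_iff_of_nonneg
          (fun i _ => by split <;> positivity)).mp hP0 i (Finset.mem_univ i)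
        rw [if_neg hi] at this
        have : |h i| = 0 := by linarith
        exact abs_eq_zero.mp this
      have hfS : ∀ j : Ω, (j : Fin n) ∉ S → f j = 0 := by
        intro j hj
        have := (Finset.sum_eq_zero_iff_of_nonneg
          (fun j _ => by split <;> positivity)).mp hQ0 j (Finset.mem_univ j)
        rw [if_neg hj] at this
        have : |f j| = 0 := by linarith
        exact abs_eq_zero.mp this
      -- A *ᵥ h vanishes on J
      have hAhJ : ∀ i ∈ J, A.mulVec h i = 0 := by
        intro i hi
        have hiΩ : i ∈ Ω := (Finset.sdiff_subset) (hJ ▸ hi)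
        have hiS : i ∉ S := by
          rw [hJ] at hi
          exact (Finset.mem_sdiff.mp hi).2
        have : M.mulVec h ⟨i, hiΩ⟩ = -f ⟨i, hiΩ⟩ := hconstr ⟨i, hiΩ⟩
        have hf0 : f ⟨i, hiΩ⟩ = 0 := hfS ⟨i, hiΩ⟩ hiS
        have hMA : M.mulVec h ⟨i, hiΩ⟩ = A.mulVec h i := rfl
        rw [hMA, hf0] at this
        simpa using this
      -- energy identity
      have henergy : (∑ i, (A.mulVec h i) ^ 2) = ∑ i, h i ^ 2 := by
        have hd : A.mulVec h ⬝ᵥ A.mulVec h = h ⬝ᵥ h := by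
          calc A.mulVec h ⬝ᵥ A.mulVec h
              = ((A.mulVec h) ᵥ* A) ⬝ᵥ h := Matrix.dotProduct_mulVec _ _ _
            _ = (Aᵀ.mulVec (A.mulVec h)) ⬝ᵥ h := by rw [Matrix.mulVec_transpose]
            _ = ((Aᵀ * A).mulVec h) ⬝ᵥ h := by rw [Matrix.mulVec_mulVec]
            _ = h ⬝ᵥ h := by rw [hA, Matrix.one_mulVec]
        simpa [dotProduct, pow_two] using hd
      -- restrict to Jᶜ rows and T columns
      have hrow : ∀ i : {a // a ∈ Jᶜ},
          ((_root_.sub A Jᶜ T).mulVec (fun j : {a // a ∈ T} => h j.1)) i = A.mulVec h i.1 := by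
        intro i
        rw [Matrix.mulVec, Matrix.mulVec]
        simp only [dotProduct, _root_.sub, Matrix.submatrix_apply]
        rw [Finset.sum_coe_sort T (fun j => A i.1 j * h j)]
        apply Finset.sum_subset (Finset.subset_univ T)
        intro j _ hjT
        rw [hhT j hjT, mul_zero]
      have hsplit : (∑ i, (A.mulVec h i) ^ 2)
          = (∑ i ∈ J, (A.mulVec h i) ^ 2) + ∑ i ∈ Jᶜ, (A.mulVec h i) ^ 2 :=
        (Finset.sum_add_sum_compl J _).symm
      have hJ0 : (∑ i ∈ J, (A.mulVec h i) ^ 2) = 0 :=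
        Finset.sum_eq_zero fun i hi => by rw [hAhJ i hi]; ring
      have hJc : (∑ i ∈ Jᶜ, (A.mulVec h i) ^ 2)
          = ∑ i : {a // a ∈ Jᶜ},
              ((_root_.sub A Jᶜ T).mulVec (fun j : {a // a ∈ T} => h j.1)) i ^ 2 := by
        rw [← Finset.sum_coe_sort (Jᶜ) (fun i => (A.mulVec h i) ^ 2)]
        apply Finset.sum_congr rfl
        intro i _
        rw [hrow i]
      have hTsum : (∑ j : {a // a ∈ T}, h j.1 ^ 2) = ∑ i, h i ^ 2 := by
        rw [Finset.sum_coe_sort T (fun j => h j ^ 2)]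
        apply Finset.sum_subset (Finset.subset_univ T)
        intro j _ hjT
        rw [hhT j hjT]
        ring
      have hlhs : l2 ((_root_.sub A Jᶜ T).mulVec (fun j : {a // a ∈ T} => h j.1)) ^ 2
          = ∑ i, h i ^ 2 := by
        rw [l2_sq, ← hJc, ← henergy, hsplit, hJ0, zero_add]
      have hrhs : l2 (fun j : {a // a ∈ T} => h j.1) ^ 2 = ∑ i, h i ^ 2 := by
        rw [l2_sq, hTsum]
      have hb := l2_mulVec_le (_root_.sub A Jᶜ T) (fun j : {a // a ∈ T} => h j.1)
      have hbsq : l2 ((_root_.sub A Jᶜ T).mulVec (fun j : {a // a ∈ T} => h j.1)) ^ 2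
          ≤ (specNorm (_root_.sub A Jᶜ T)) ^ 2 * l2 (fun j : {a // a ∈ T} => h j.1) ^ 2 := by
        have := pow_le_pow_left₀ (l2_nonneg _) hb 2
        rw [mul_pow] at this
        exact this
      rw [hlhs, hrhs] at hbsq
      have hs0 : (∑ i, h i ^ 2) = 0 := by
        by_contra hs
        have hsnn : 0 ≤ ∑ i, h i ^ 2 := Finset.sum_nonneg fun i _ => sq_nonneg _
        have hspos : 0 < ∑ i, h i ^ 2 := lt_of_le_of_ne hsnn (Ne.symm hs)
        have hN : 0 ≤ specNorm (_root_.sub A Jᶜ T) := norm_nonneg _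
        have hN2 : specNorm (_root_.sub A Jᶜ T) ^ 2 < 1 := by nlinarith
        have := mul_lt_mul_of_pos_right hN2 hspos
        rw [one_mul] at this
        linarith
      have hz : ∀ i, h i = 0 := by
        intro i
        have := (Finset.sum_eq_zero_iff_of_nonneg
          (fun i _ => sq_nonneg (h i))).mp hs0 i (Finset.mem_univ i)
        exact pow_eq_zero_iff (by norm_num) |>.mp this
      have hxeq : x = xs := by
        funext i
        have := hz i
        rw [hh, Pi.sub_apply] at this
        linarith
      have hfz : ∀ j : Ω, f j = 0 := by
        intro j
        have := hconstr j
        have hm : M.mulVec h j = 0 := by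
          rw [Matrix.mulVec]
          apply Finset.sum_eq_zero
          intro k _
          rw [hz k, mul_zero]
        rw [hm] at this
        linarith [this, neg_eq_zero.mp this.symm]
      have heeq : e = es := by
        funext j
        have := hfz j
        rw [hf, Pi.sub_apply] at this
        linarith
      exact ⟨hxeq, heeq⟩
    · have hpos : 0 < P + lam * Q := by
        rcases hP.lt_or_eq with hPpos | hPeq
        · have := mul_nonneg hlam.le hQ
          linarith
        · have hQne : Q ≠ 0 := fun hq => hPQ ⟨hPeq.symm, hq⟩
          have hQpos : 0 < Q := lt_of_le_of_ne hQ (Ne.symm hQne)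
          have := mul_pos hlam hQpos
          linarith
      linarith
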